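/- Let f : Ω₁ → Ω₂ be a proper holomorphic map of degree m between bounded domains in ℂⁿ with complex Jacobian u, local inverses g₁,…,g_m with Jacobians u₁,…,u_m defined locally on Ω₂ \ f(E). If ψ ∈ L²(Ω₁), then the symmetrized function Σ_{k=1}^m u_k·(ψ∘g_k), defined almost everywhere on Ω₂, lies in L²(Ω₂), with ‖Σ_k u_k·(ψ∘g_k)‖²_{L²(Ω₂)} ≤ m·‖ψ‖²_{L²(Ω₁)}. -/

import Mathlib

open MeasureTheory

/-- Partial derivative `∂/∂z_j` of a function of several complex variables. -/
noncomputable def pderivC {n : ℕ} (j : Fin n) (f : (Fin n → ℂ) → ℂ) :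
    (Fin n → ℂ) → ℂ :=
  fun z => deriv (fun w => f (Function.update z j w)) (z j)

/-- The complex Jacobian determinant `u = det [∂f_i/∂z_j]` of a holomorphic map. -/
noncomputable def jacDet {n : ℕ} (f : (Fin n → ℂ) → (Fin n → ℂ)) (z : Fin n → ℂ) : ℂ :=
  (Matrix.of fun i j : Fin n => pderivC j (fun w => f w i) z).det

/-- A globally measurable function agreeing with `jacDet f` at points of
differentiability. -/
noncomputable def jacDet' {n : ℕ} (f : (Fin n → ℂ) → (Fin n → ℂ)) (z : Fin n → ℂ) : ℂ :=
  (Matrix.of fun i j : Fin n => fderiv ℂ f z (Pi.single j 1) i).det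

theorem jacDet'_measurable {n : ℕ} (f : (Fin n → ℂ) → (Fin n → ℂ)) :
    Measurable (jacDet' f) := by
  have hdet : Continuous fun A : Fin n → Fin n → ℂ => (Matrix.of A).det :=
    Continuous.matrix_det (continuous_pi fun i => continuous_pi fun j =>
      (continuous_apply j).comp (continuous_apply i))
  have hM : Measurable (fun z (i j : Fin n) => fderiv ℂ f z (Pi.single j 1) i) := by
    refine measurable_pi_lambda _ fun i => measurable_pi_lambda _ fun j => ?_
    exact (measurable_pi_apply i).comp (measurable_fderiv_apply_const ℂ f (Pi.single j 1))
  exact hdet.measurable.comp hM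

theorem jacDet_eq_jacDet' {n : ℕ} {f : (Fin n → ℂ) → (Fin n → ℂ)} {z : Fin n → ℂ}
    (hdf : DifferentiableAt ℂ f z) : jacDet f z = jacDet' f z := by
  unfold jacDet jacDet'
  congr 1
  ext i j
  show pderivC j (fun w => f w i) z = fderiv ℂ f z (Pi.single j 1) i
  have hupd : HasDerivAt (fun w : ℂ => Function.update z j w) (Pi.single j 1) (z j) := by
    rw [hasDerivAt_pi]
    intro i
    rcases eq_or_ne i j with rfl | hij
    · simp only [Function.update_self, Pi.single_eq_same]
      exact hasDerivAt_id _
    · simp only [Function.update_of_ne hij, Pi.single_eq_of_ne hij]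
      exact hasDerivAt_const _ _
  have h1 : Function.update z j (z j) = z := Function.update_eq_self j z
  have hf' : HasFDerivAt f (fderiv ℂ f z) (Function.update z j (z j)) := by
    rw [h1]; exact hdf.hasFDerivAt
  have hcomp : HasDerivAt (fun w : ℂ => f (Function.update z j w))
      (fderiv ℂ f z (Pi.single j 1)) (z j) := hf'.comp_hasDerivAt _ hupd
  have hcoord : HasDerivAt (fun w : ℂ => f (Function.update z j w) i)
      (fderiv ℂ f z (Pi.single j 1) i) (z j) := hasDerivAt_pi.mp hcomp i
  exact hcoord.deriv

theorem nnnorm_sq_sum_le {m : ℕ} (a : Fin m → ℂ) :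
    (‖∑ k, a k‖₊ : ENNReal) ^ 2 ≤ (m : ENNReal) * ∑ k, (‖a k‖₊ : ENNReal) ^ 2 := by
  have h1 : ‖∑ k, a k‖ ^ 2 ≤ (m : ℝ) * ∑ k, ‖a k‖ ^ 2 := by
    calc ‖∑ k, a k‖ ^ 2 ≤ (∑ k, ‖a k‖) ^ 2 :=
          pow_le_pow_left₀ (norm_nonneg _) (norm_sum_le _ _) 2
      _ ≤ (Finset.univ.card : ℝ) * ∑ k, ‖a k‖ ^ 2 := sq_sum_le_card_mul_sum_sq
      _ = (m : ℝ) * ∑ k, ‖a k‖ ^ 2 := by simp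
  calc (‖∑ k, a k‖₊ : ENNReal) ^ 2 = ENNReal.ofReal (‖∑ k, a k‖ ^ 2) := by
        rw [ENNReal.ofReal_pow (norm_nonneg _), ofReal_norm, enorm_eq_nnnorm]
    _ ≤ ENNReal.ofReal ((m : ℝ) * ∑ k, ‖a k‖ ^ 2) := ENNReal.ofReal_le_ofReal h1
    _ = (m : ENNReal) * ∑ k, (‖a k‖₊ : ENNReal) ^ 2 := by
        rw [ENNReal.ofReal_mul (by positivity), ENNReal.ofReal_natCast,
          ENNReal.ofReal_sum_of_nonneg (fun k _ => by positivity)]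
        congr 1
        refine Finset.sum_congr rfl fun k _ => ?_
        rw [ENNReal.ofReal_pow (norm_nonneg _), ofReal_norm, enorm_eq_nnnorm]

/-- For a proper holomorphic map `f : Ω₁ → Ω₂` of degree `m` with local inverses
`g₁, …, g_m` (with complex Jacobians `u_k = 1/(u ∘ g_k)`), and `ψ ∈ L²(Ω₁)`, the
symmetrized function `Σ_k u_k·(ψ∘g_k)` lies in `L²(Ω₂)` with
`‖Σ_k u_k·(ψ∘g_k)‖²_{L²(Ω₂)} ≤ m·‖ψ‖²_{L²(Ω₁)}`. -/
theorem proper_map_symmetrization_L2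
    {n m : ℕ} (Ω₁ Ω₂ : Set (Fin n → ℂ))
    (hΩ₁o : IsOpen Ω₁) (hΩ₁c : IsConnected Ω₁) (hΩ₁b : Bornology.IsBounded Ω₁)
    (hΩ₂o : IsOpen Ω₂) (hΩ₂c : IsConnected Ω₂) (hΩ₂b : Bornology.IsBounded Ω₂)
    (f : (Fin n → ℂ) → (Fin n → ℂ))
    (hf : DifferentiableOn ℂ f Ω₁) (hmaps : Set.MapsTo f Ω₁ Ω₂)
    (hproper : ∀ L : Set (Fin n → ℂ), L ⊆ Ω₂ → IsCompact L → IsCompact (Ω₁ ∩ f ⁻¹' L))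
    (E : Set (Fin n → ℂ)) (hE : E = {z ∈ Ω₁ | jacDet f z = 0})
    (hE0 : volume E = 0) (hfE0 : volume (f '' E) = 0)
    (hcount : ∀ w ∈ Ω₂ \ f '' E, ((Ω₁ \ E) ∩ f ⁻¹' {w}).ncard = m)
    (honto : f '' (Ω₁ \ E) = Ω₂ \ f '' E)
    (hjac : ∀ z ∈ Ω₁, LinearMap.det ((fderiv ℝ f z).toLinearMap) = ‖jacDet f z‖ ^ 2)
    -- a measurable global choice of the `m` local inverses of `f` on `Ω₂ \ f(E)`
    (g : Fin m → (Fin n → ℂ) → (Fin n → ℂ)) (hgm : ∀ k, Measurable (g k))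
    (hg : ∀ w ∈ Ω₂ \ f '' E,
      (∀ k, g k w ∈ Ω₁ \ E ∧ f (g k w) = w) ∧ Function.Injective fun k => g k w)
    (ψ : (Fin n → ℂ) → ℂ) (hψm : Measurable ψ)
    (hψ : MemLp ψ 2 (volume.restrict Ω₁)) :
    MemLp (fun w => ∑ k, (jacDet f (g k w))⁻¹ * ψ (g k w)) 2 (volume.restrict Ω₂) ∧
      ∫ w in Ω₂, ‖∑ k, (jacDet f (g k w))⁻¹ * ψ (g k w)‖ ^ 2
        ≤ m * ∫ z in Ω₁, ‖ψ z‖ ^ 2 := by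
  classical
  set u := jacDet f with hu
  set u' := jacDet' f with hu'
  -- differentiability at points of Ω₁
  have hdiff : ∀ z ∈ Ω₁, DifferentiableAt ℂ f z := fun z hz =>
    (hf z hz).differentiableAt (hΩ₁o.mem_nhds hz)
  have huu' : ∀ z ∈ Ω₁, u z = u' z := fun z hz => jacDet_eq_jacDet' (hdiff z hz)
  -- the null measurable hull of f '' E
  set T : Set (Fin n → ℂ) := toMeasurable volume (f '' E) with hT
  have hTm : MeasurableSet T := measurableSet_toMeasurable _ _
  have hT0 : volume T = 0 := by rw [hT, measure_toMeasurable]; exact hfE0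
  have hfET : f '' E ⊆ T := subset_toMeasurable _ _
  set S : Set (Fin n → ℂ) := Ω₂ \ T with hS
  have hSm : MeasurableSet S := hΩ₂o.measurableSet.diff hTm
  have hSS : S ⊆ Ω₂ \ f '' E := fun w hw => ⟨hw.1, fun h => hw.2 (hfET h)⟩
  have hSΩ₂ : S =ᵐ[volume] Ω₂ := by
    refine (MeasureTheory.ae_eq_set).2 ⟨?_, ?_⟩
    · have h : S \ Ω₂ = (∅ : Set (Fin n → ℂ)) := by
        ext x
        simp only [hS, Set.mem_diff, Set.mem_empty_iff_false, iff_false, not_and, not_not]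
        tauto
      rw [h]; simp
    · refine measure_mono_null ?_ hT0
      intro x hx; rcases hx with ⟨hx1, hx2⟩
      by_contra hxT
      exact hx2 ⟨hx1, hxT⟩
  -- the sheets
  set B : Fin m → Set (Fin n → ℂ) :=
    fun k => {z | z ∈ Ω₁ ∧ f z ∈ S ∧ g k (f z) = z} with hB
  have hBmem : ∀ k z, z ∈ B k ↔ z ∈ Ω₁ ∧ f z ∈ S ∧ g k (f z) = z := fun k z => Iff.rfl
  -- B k is measurable
  have hBm : ∀ k, MeasurableSet (B k) := by
    intro k
    have hF : Measurable (fun x : Ω₁ => f x.val) :=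
      (hf.continuousOn.restrict).measurable
    have hC : MeasurableSet {x : Ω₁ | f x.val ∈ S ∧ g k (f x.val) = x.val} := by
      refine (hF hSm).inter ?_
      exact measurableSet_eq_fun ((hgm k).comp hF) measurable_subtype_coe
    have him : MeasurableSet (Subtype.val '' {x : Ω₁ | f x.val ∈ S ∧ g k (f x.val) = x.val}) :=
      MeasurableSet.subtype_image hΩ₁o.measurableSet hC
    convert him using 1
    ext z
    constructor
    · rintro ⟨hz1, hz2, hz3⟩
      exact ⟨⟨z, hz1⟩, ⟨hz2, hz3⟩, rfl⟩
    · rintro ⟨⟨x, hx⟩, ⟨h1, h2⟩, rfl⟩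
      exact ⟨hx, h1, h2⟩
  -- basic properties of B k
  have hBsub : ∀ k, B k ⊆ Ω₁ \ E := by
    intro k z hz
    rcases hz with ⟨hz1, hz2, hz3⟩
    have := ((hg (f z) (hSS hz2)).1 k).1
    rwa [hz3] at this
  have hBΩ₁ : ∀ k, B k ⊆ Ω₁ := fun k z hz => (hBsub k hz).1
  have hfB : ∀ k, f '' B k = S := by
    intro k
    ext w
    constructor
    · rintro ⟨z, hz, rfl⟩; exact hz.2.1
    · intro hw
      obtain ⟨⟨hz1, hz2⟩, hfz⟩ := (hg w (hSS hw)).1 k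
      exact ⟨g k w, ⟨hz1, by rw [hfz]; exact hw, by rw [hfz]⟩, hfz⟩
  have hinjB : ∀ k, Set.InjOn f (B k) := by
    intro k z₁ hz₁ z₂ hz₂ hf12
    rw [← hz₁.2.2, ← hz₂.2.2, hf12]
  have hdisj : Pairwise (Function.onFun Disjoint B) := by
    intro k j hkj
    rw [Function.onFun, Set.disjoint_left]
    rintro z ⟨hz1, hz2, hz3⟩ ⟨hz1', hz2', hz3'⟩
    exact hkj ((hg (f z) (hSS hz2)).2 (show g k (f z) = g j (f z) by rw [hz3, hz3']))
  -- nonvanishing of u on B k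
  have huB : ∀ k, ∀ z ∈ B k, u z ≠ 0 := by
    intro k z hz
    have hzE := hBsub k hz
    intro h0
    exact hzE.2 (by rw [hE]; exact ⟨hzE.1, h0⟩)
  -- the integrands
  set F : (Fin n → ℂ) → ℂ := fun w => ∑ k, (u (g k w))⁻¹ * ψ (g k w) with hF
  set F' : (Fin n → ℂ) → ℂ := fun w => ∑ k, (u' (g k w))⁻¹ * ψ (g k w) with hF'
  have hgΩ₁ : ∀ w ∈ S, ∀ k, g k w ∈ Ω₁ := fun w hw k => ((hg w (hSS hw)).1 k).1.1
  have hFF' : ∀ w ∈ S, F w = F' w := by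
    intro w hw
    refine Finset.sum_congr rfl fun k _ => ?_
    rw [huu' _ (hgΩ₁ w hw k)]
  have hF'meas : Measurable F' := by
    refine Finset.measurable_sum _ fun k _ => ?_
    exact (((jacDet'_measurable f).comp (hgm k)).inv).mul (hψm.comp (hgm k))
  -- a.e. equality of F and F' on Ω₂
  have haeS : ∀ᵐ w ∂(volume.restrict Ω₂), w ∈ S := by
    have h1 : ∀ᵐ w ∂(volume.restrict Ω₂), w ∈ Ω₂ := ae_restrict_mem hΩ₂o.measurableSet
    have h2 : ∀ᵐ w ∂(volume.restrict Ω₂), w ∉ T := by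
      refine ae_restrict_of_ae ?_
      have := measure_eq_zero_iff_ae_notMem.mp hT0
      exact this
    filter_upwards [h1, h2] with w hw1 hw2
    exact ⟨hw1, hw2⟩
  have hFae : F =ᵐ[volume.restrict Ω₂] F' := by
    filter_upwards [haeS] with w hw using hFF' w hw
  have hFsm : AEStronglyMeasurable F (volume.restrict Ω₂) :=
    (hF'meas.stronglyMeasurable.aestronglyMeasurable).congr hFae.symm
  -- key lintegral quantities
  set R : ENNReal := ∫⁻ z in Ω₁, (‖ψ z‖₊ : ENNReal) ^ 2 with hR
  have hψint : Integrable (fun z => ‖ψ z‖ ^ 2) (volume.restrict Ω₁) :=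
    (memLp_two_iff_integrable_sq_norm hψ.1).mp hψ
  have hRfin : R < ⊤ := by
    have := hψint.hasFiniteIntegral
    rw [hasFiniteIntegral_def] at this
    refine lt_of_le_of_lt (le_of_eq ?_) this
    refine lintegral_congr fun z => ?_
    rw [← ENNReal.coe_pow]
    congr 1
    ext
    simp [Real.nnnorm_of_nonneg (by positivity : (0:ℝ) ≤ ‖ψ z‖ ^ 2)]
  -- the change of variables on each sheet
  have hCOV : ∀ k, (∫⁻ w in S, (‖(u' (g k w))⁻¹ * ψ (g k w)‖₊ : ENNReal) ^ 2)
      = ∫⁻ z in B k, (‖ψ z‖₊ : ENNReal) ^ 2 := by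
    intro k
    have hder : ∀ z ∈ B k, HasFDerivWithinAt f (fderiv ℝ f z) (B k) z := by
      intro z hz
      exact (((hdiff z (hBΩ₁ k hz)).restrictScalars ℝ).hasFDerivAt).hasFDerivWithinAt
    have := lintegral_image_eq_lintegral_abs_det_fderiv_mul volume (hBm k) hder (hinjB k)
      (fun w => (‖(u' (g k w))⁻¹ * ψ (g k w)‖₊ : ENNReal) ^ 2)
    rw [hfB k] at this
    rw [this]
    refine setLIntegral_congr_fun (hBm k) (fun z hz => ?_)
    have hzΩ := hBΩ₁ k hz
    have hgz : g k (f z) = z := hz.2.2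
    have hune : u z ≠ 0 := huB k z hz
    have hdet : (fderiv ℝ f z).det = ‖u z‖ ^ 2 := hjac z hzΩ
    rw [hgz, hdet, abs_of_nonneg (by positivity), ← huu' z hzΩ]
    have h1 : (‖(u z)⁻¹ * ψ z‖₊ : ENNReal) = (‖u z‖₊ : ENNReal)⁻¹ * (‖ψ z‖₊ : ENNReal) := by
      rw [nnnorm_mul, nnnorm_inv, ENNReal.coe_mul, ENNReal.coe_inv (by simpa using hune)]
    rw [h1]
    have h2 : ENNReal.ofReal (‖u z‖ ^ 2) = (‖u z‖₊ : ENNReal) ^ 2 := by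
      rw [ENNReal.ofReal_pow (norm_nonneg _), ofReal_norm, enorm_eq_nnnorm]
    rw [h2, mul_pow]
    have hc : (‖u z‖₊ : ENNReal) ≠ 0 := by simpa using hune
    have hctop : (‖u z‖₊ : ENNReal) ≠ ⊤ := ENNReal.coe_ne_top
    rw [← mul_assoc, ← mul_pow, ENNReal.mul_inv_cancel hc hctop, one_pow, one_mul]
  -- main lintegral bound
  have hmain : (∫⁻ w in Ω₂, (‖F w‖₊ : ENNReal) ^ 2) ≤ (m : ENNReal) * R := by
    have e1 : (∫⁻ w in Ω₂, (‖F w‖₊ : ENNReal) ^ 2)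
        = ∫⁻ w in S, (‖F w‖₊ : ENNReal) ^ 2 := (setLIntegral_congr hSΩ₂).symm
    have e2 : (∫⁻ w in S, (‖F w‖₊ : ENNReal) ^ 2)
        ≤ ∫⁻ w in S, (m : ENNReal) * ∑ k, (‖(u' (g k w))⁻¹ * ψ (g k w)‖₊ : ENNReal) ^ 2 := by
      refine setLIntegral_mono' hSm fun w hw => ?_
      have : F w = F' w := hFF' w hw
      rw [this]
      exact nnnorm_sq_sum_le _
    have e3 : (∫⁻ w in S, (m : ENNReal) * ∑ k, (‖(u' (g k w))⁻¹ * ψ (g k w)‖₊ : ENNReal) ^ 2)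
        = (m : ENNReal) * ∑ k, ∫⁻ w in S, (‖(u' (g k w))⁻¹ * ψ (g k w)‖₊ : ENNReal) ^ 2 := by
      rw [lintegral_const_mul' _ _ (by finiteness)]
      congr 1
      refine lintegral_finset_sum _ fun k _ => ?_
      have : Measurable fun w => (u' (g k w))⁻¹ * ψ (g k w) :=
        (((jacDet'_measurable f).comp (hgm k)).inv).mul (hψm.comp (hgm k))
      exact (this.nnnorm.coe_nnreal_ennreal).pow_const 2
    have e4 : ((m : ENNReal) * ∑ k, ∫⁻ w in S, (‖(u' (g k w))⁻¹ * ψ (g k w)‖₊ : ENNReal) ^ 2)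
        = (m : ENNReal) * ∑ k, ∫⁻ z in B k, (‖ψ z‖₊ : ENNReal) ^ 2 := by
      congr 1
      exact Finset.sum_congr rfl fun k _ => hCOV k
    have e5 : (∑ k, ∫⁻ z in B k, (‖ψ z‖₊ : ENNReal) ^ 2)
        = ∫⁻ z in ⋃ k, B k, (‖ψ z‖₊ : ENNReal) ^ 2 := by
      rw [lintegral_iUnion hBm hdisj]
      exact (tsum_fintype _).symm
    have e6 : (∫⁻ z in ⋃ k, B k, (‖ψ z‖₊ : ENNReal) ^ 2) ≤ R := by
      refine lintegral_mono_set ?_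
      exact Set.iUnion_subset hBΩ₁
    calc (∫⁻ w in Ω₂, (‖F w‖₊ : ENNReal) ^ 2)
        = ∫⁻ w in S, (‖F w‖₊ : ENNReal) ^ 2 := e1
      _ ≤ _ := e2
      _ = _ := e3
      _ = _ := e4
      _ ≤ (m : ENNReal) * R := by
          rw [e5]
          exact mul_le_mul_right e6 _
  -- Memℒp
  have hFint : Integrable (fun w => ‖F w‖ ^ 2) (volume.restrict Ω₂) := by
    constructor
    · exact (hFsm.norm.aemeasurable.pow_const 2).aestronglyMeasurable
    · rw [hasFiniteIntegral_def]
      refine lt_of_le_of_lt (le_of_eq ?_) (lt_of_le_of_lt hmain (by finiteness))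
      refine lintegral_congr fun w => ?_
      rw [← ENNReal.coe_pow]
      rw [enorm_eq_nnnorm]
      congr 1
      ext
      simp [Real.nnnorm_of_nonneg (by positivity : (0:ℝ) ≤ ‖F w‖ ^ 2)]
  have hmem : MemLp F 2 (volume.restrict Ω₂) :=
    (memLp_two_iff_integrable_sq_norm hFsm).mpr hFint
  refine ⟨hmem, ?_⟩
  -- convert integrals to lintegrals
  have hι : ∀ (μ : Measure (Fin n → ℂ)) (h : (Fin n → ℂ) → ℂ),
      AEStronglyMeasurable h μ →
      ∫ x, ‖h x‖ ^ 2 ∂μ = (∫⁻ x, (‖h x‖₊ : ENNReal) ^ 2 ∂μ).toReal := by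
    intro μ h hh
    rw [integral_eq_lintegral_of_nonneg_ae (Filter.Eventually.of_forall fun x => by positivity)
      ((hh.norm.aemeasurable.pow_const 2).aestronglyMeasurable)]
    congr 1
    refine lintegral_congr fun x => ?_
    rw [ENNReal.ofReal_pow (norm_nonneg _), ofReal_norm, enorm_eq_nnnorm]
  rw [hι _ F hFsm, hι _ ψ hψ.1]
  rw [← hR]
  have hfin : (m : ENNReal) * R ≠ ⊤ := by finiteness
  calc (∫⁻ w in Ω₂, (‖F w‖₊ : ENNReal) ^ 2).toReal
      ≤ ((m : ENNReal) * R).toReal := ENNReal.toReal_mono hfin hmain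
    _ = m * R.toReal := by rw [ENNReal.toReal_mul]; simp
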